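/- Work over the field RatFunc ℝ of real rational functions; call a rational function proper if it is zero or has intDegree ≤ 0 (numerator degree at most denominator degree). Let the internal index set be S ⊕ D ⊕ P and the external column index set be Xs ⊕ Xd. Let G be a square matrix indexed by S ⊕ D ⊕ P and X a matrix with rows S ⊕ D ⊕ P and columns Xs ⊕ Xd, all of whose entries are proper, such that the block of G with rows in P and columns in S is zero and the block of X with rows in P and columns in Xs is zero. Assume I − G is invertible and that det(I − G_{P,P}) is nonzero with intDegree equal to 0 (well-posedness), where G_{P,P} is the P × P block of G. Set T := (I − G)⁻¹ · X. Then for every subset W̄ of D ⊕ P there exists a matrix K, with rows indexed by W̄ and columns indexed by D ⊕ Xd, all of whose entries are proper, such that the submatrix of T with rows W̄ equals K · M, where M is the (D ⊕ Xd) × (Xs ⊕ Xd) matrix whose top block (rows D) is the D-row submatrix of T and whose bottom block (rows Xd) is [0 , I] (zero on the Xs columns and the identity on the Xd columns). -/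

import Mathlib

open Matrix

/-- A real rational function is proper if it is zero or its numerator degree is
at most its denominator degree. -/
def IsProper (f : RatFunc ℝ) : Prop := f = 0 ∨ f.intDegree ≤ 0

open Classical in
noncomputable def vinf : Valuation (RatFunc ℝ) (WithZero (Multiplicative ℤ)) :=
  RatFunc.inftyValuation ℝ

lemma isProper_iff (f : RatFunc ℝ) : IsProper f ↔ vinf f ≤ 1 := by
  classical
  unfold IsProper vinf
  rw [RatFunc.inftyValuation_apply, RatFunc.inftyValuationDef]
  split_ifs with h
  · simp [h]
  · simp only [h, false_or]
    rw [← WithZero.exp_zero, WithZero.exp_le_exp]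

noncomputable def properR : Subring (RatFunc ℝ) := (vinf).integer

lemma mem_properR {f : RatFunc ℝ} : f ∈ properR ↔ IsProper f := (isProper_iff f).symm

lemma proper_inv_mul {g f : RatFunc ℝ} (hg : g ≠ 0) (hdeg : g.intDegree = 0)
    (hf : IsProper f) : IsProper (g⁻¹ * f) := by
  rw [isProper_iff] at hf ⊢
  have hvg : vinf g = 1 := by
    classical
    show RatFunc.inftyValuationDef ℝ g = 1
    rw [RatFunc.inftyValuation_of_nonzero ℝ hg, hdeg]
    rfl
  rw [_root_.map_mul, map_inv₀, hvg, inv_one, one_mul]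
  exact hf

lemma adjugate_mem {n : Type*} [Fintype n] [DecidableEq n]
    (E : Matrix n n (RatFunc ℝ)) (hE : ∀ i j, E i j ∈ properR) :
    ∀ i j, E.adjugate i j ∈ properR := by
  intro i j
  let E' : Matrix n n properR := fun i j => ⟨E i j, hE i j⟩
  have hmap : properR.subtype.mapMatrix E' = E := by ext i j; rfl
  have := (properR.subtype.map_adjugate E').symm
  rw [hmap] at this
  rw [this]
  exact (E'.adjugate i j).2

set_option synthInstance.maxHeartbeats 400000 in
lemma inv_entries_proper {n : Type*} [Fintype n] [DecidableEq n]
    (E : Matrix n n (RatFunc ℝ)) (hE : ∀ i j, E i j ∈ properR)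
    (hdne : E.det ≠ 0) (hdeg : E.det.intDegree = 0) :
    ∀ i j, IsProper (E⁻¹ i j) := by
  intro i j
  rw [Matrix.inv_def, Matrix.smul_apply, Ring.inverse_eq_inv', smul_eq_mul]
  exact proper_inv_mul hdne hdeg (mem_properR.mp (adjugate_mem E hE i j))

theorem stmt9 {S D P Xs Xd : Type*}
    [Fintype S] [Fintype D] [Fintype P] [Fintype Xs] [Fintype Xd]
    [DecidableEq S] [DecidableEq D] [DecidableEq P]
    [DecidableEq Xs] [DecidableEq Xd]
    (G : Matrix (S ⊕ D ⊕ P) (S ⊕ D ⊕ P) (RatFunc ℝ))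
    (X : Matrix (S ⊕ D ⊕ P) (Xs ⊕ Xd) (RatFunc ℝ))
    (hGproper : ∀ i j, IsProper (G i j))
    (hXproper : ∀ i j, IsProper (X i j))
    (hGPS : ∀ (p : P) (s : S), G (Sum.inr (Sum.inr p)) (Sum.inl s) = 0)
    (hXPXs : ∀ (p : P) (x : Xs), X (Sum.inr (Sum.inr p)) (Sum.inl x) = 0)
    (hinv : IsUnit (1 - G))
    (hwpne : ((1 : Matrix P P (RatFunc ℝ))
        - G.submatrix (fun p => Sum.inr (Sum.inr p))
            (fun p => Sum.inr (Sum.inr p))).det ≠ 0)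
    (hwpdeg : ((1 : Matrix P P (RatFunc ℝ))
        - G.submatrix (fun p => Sum.inr (Sum.inr p))
            (fun p => Sum.inr (Sum.inr p))).det.intDegree = 0) :
    ∀ Wb : Finset (D ⊕ P),
      ∃ K : Matrix ↥Wb (D ⊕ Xd) (RatFunc ℝ),
        (∀ i j, IsProper (K i j)) ∧
        ((1 - G)⁻¹ * X).submatrix (fun i : ↥Wb => Sum.inr (i : D ⊕ P)) id
          = K * Matrix.fromRows
              (((1 - G)⁻¹ * X).submatrix (fun d : D => Sum.inr (Sum.inl d)) id)
              (Matrix.fromCols (0 : Matrix Xd Xs (RatFunc ℝ))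
                (1 : Matrix Xd Xd (RatFunc ℝ))) := by
  classical
  intro Wb
  let e : P → S ⊕ D ⊕ P := fun p => Sum.inr (Sum.inr p)
  let dD : D → S ⊕ D ⊕ P := fun d => Sum.inr (Sum.inl d)
  set T := (1 - G)⁻¹ * X with hT
  have hdet : IsUnit (1 - G).det := (Matrix.isUnit_iff_isUnit_det _).mp hinv
  have hMul : (1 - G) * T = X := by
    rw [hT, ← Matrix.mul_assoc, Matrix.mul_nonsing_inv _ hdet, Matrix.one_mul]
  set E : Matrix P P (RatFunc ℝ) := (1 : Matrix P P (RatFunc ℝ))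
      - G.submatrix (fun p => Sum.inr (Sum.inr p)) (fun p => Sum.inr (Sum.inr p)) with hE
  have hEapp : ∀ p q, E p q = (1 - G) (e p) (e q) := by
    intro p q
    simp [hE, Matrix.sub_apply, Matrix.one_apply, e, Sum.inr.injEq]
  have hrow : ∀ p j, ∑ q, E p q * T (e q) j
      = X (e p) j + ∑ d, G (e p) (dD d) * T (dD d) j := by
    intro p j
    have h1 : ∑ k, (1 - G) (e p) k * T k j = X (e p) j := by
      rw [← Matrix.mul_apply, hMul]
    rw [Fintype.sum_sum_type, Fintype.sum_sum_type] at h1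
    change ∑ s, _ + (∑ d, (1 - G) (e p) (dD d) * T (dD d) j + ∑ q, (1 - G) (e p) (e q) * T (e q) j) = _ at h1
    have hS : ∀ s, (1 - G) (e p) (Sum.inl s) * T (Sum.inl s) j = 0 := by
      intro s
      simp [Matrix.sub_apply, Matrix.one_apply, hGPS p s, e]
    have hD : ∀ d, (1 - G) (e p) (dD d) = -(G (e p) (dD d)) := by
      intro d
      simp [Matrix.sub_apply, Matrix.one_apply, e, dD]
    simp only [hS, Finset.sum_const_zero, zero_add, hD, neg_mul] at h1
    rw [Finset.sum_neg_distrib] at h1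
    have h2 : ∀ q, (1 - G) (e p) (e q) * T (e q) j = E p q * T (e q) j := by
      intro q; rw [hEapp]
    simp only [h2] at h1
    linear_combination h1
  set TD := T.submatrix (fun d : D => Sum.inr (Sum.inl d)) (id : (Xs ⊕ Xd) → _) with hTD
  let TP := T.submatrix e (id : (Xs ⊕ Xd) → _)
  let GPD := G.submatrix e dD
  let XP := X.submatrix e (id : (Xs ⊕ Xd) → _)
  have hmat : E * TP = XP + GPD * TD := by
    ext p j
    rw [Matrix.mul_apply, Matrix.add_apply, Matrix.mul_apply]
    simpa [TP, hTD, GPD, XP, dD] using hrow p j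
  have hdetE : IsUnit E.det := isUnit_iff_ne_zero.mpr hwpne
  have hTPeq : TP = E⁻¹ * XP + (E⁻¹ * GPD) * TD := by
    have h3 : E⁻¹ * (E * TP) = E⁻¹ * (XP + GPD * TD) := by rw [hmat]
    rw [← Matrix.mul_assoc, Matrix.nonsing_inv_mul _ hdetE, Matrix.one_mul] at h3
    rw [h3, Matrix.mul_add, Matrix.mul_assoc]
  have hEmem : ∀ p q, E p q ∈ properR := by
    intro p q
    rw [hEapp, Matrix.sub_apply]
    refine sub_mem ?_ (mem_properR.mpr (hGproper _ _))
    rw [Matrix.one_apply]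
    split_ifs
    · exact one_mem _
    · exact zero_mem _
  have hEinv : ∀ p q, IsProper (E⁻¹ p q) := inv_entries_proper E hEmem hwpne hwpdeg
  have hXPzero : ∀ p xs, (E⁻¹ * XP) p (Sum.inl xs) = 0 := by
    intro p xs
    rw [Matrix.mul_apply]
    refine Finset.sum_eq_zero fun q _ => ?_
    simp [XP, hXPXs q xs, e]
  let A := E⁻¹ * GPD
  let B : Matrix P Xd (RatFunc ℝ) := fun p x => (E⁻¹ * XP) p (Sum.inr x)
  have hAprop : ∀ p d, IsProper (A p d) := by
    intro p d
    rw [← mem_properR]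
    rw [show A p d = ∑ q, E⁻¹ p q * GPD q d from Matrix.mul_apply]
    exact sum_mem fun q _ => mul_mem (mem_properR.mpr (hEinv p q))
      (mem_properR.mpr (hGproper (e q) (dD d)))
  have hBprop : ∀ p x, IsProper (B p x) := by
    intro p x
    rw [← mem_properR]
    rw [show B p x = ∑ q, E⁻¹ p q * XP q (Sum.inr x) from Matrix.mul_apply]
    exact sum_mem fun q _ => mul_mem (mem_properR.mpr (hEinv p q))
      (mem_properR.mpr (hXproper (e q) (Sum.inr x)))
  refine ⟨fun i => Sum.elim
      (fun d => Sum.elim (fun d' : D => if d' = d then (1 : RatFunc ℝ) else 0) (fun _ : Xd => 0))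
      (fun p => Sum.elim (fun d => A p d) (fun x => B p x)) (i : D ⊕ P), ?_, ?_⟩
  · intro i j
    rcases hi : (i : D ⊕ P) with d | p
    · simp only [hi, Sum.elim_inl, Sum.elim_inr]
      cases j with
      | inl d' =>
        simp only [Sum.elim_inl]
        split_ifs
        · exact Or.inr (le_of_eq RatFunc.intDegree_one)
        · exact Or.inl rfl
      | inr x => exact Or.inl rfl
    · simp only [hi, Sum.elim_inl, Sum.elim_inr]
      cases j with
      | inl d => exact hAprop p d
      | inr x => exact hBprop p x
  · ext i j
    erw [Matrix.submatrix_apply, Matrix.mul_apply, Fintype.sum_sum_type]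
    rcases hi : (i : D ⊕ P) with d | p
    · simp only [hi, Sum.elim_inl, Sum.elim_inr]
      simp only [Sum.elim_inl, Sum.elim_inr, Matrix.fromRows_apply_inl,
        Matrix.fromRows_apply_inr, zero_mul, Finset.sum_const_zero, add_zero, ite_mul, one_mul]
      rw [Finset.sum_ite_eq' Finset.univ d (fun d' => TD d' j)]
      simp [hTD]
    · simp only [hi, Sum.elim_inl, Sum.elim_inr]
      have hTPapp : T (e p) (id j) = (E⁻¹ * XP) p j + ((E⁻¹ * GPD) * TD) p j := by
        have := congrFun (congrFun hTPeq p) j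
        simpa [TP, Matrix.add_apply] using this
      rw [show (Sum.inr (Sum.inr p) : S ⊕ D ⊕ P) = e p from rfl, hTPapp]
      have h4 : ((E⁻¹ * GPD) * TD) p j
          = ∑ d, Sum.elim (fun d => A p d) (fun x => B p x) (Sum.inl d)
              * Matrix.fromRows TD
                (Matrix.fromCols (0 : Matrix Xd Xs (RatFunc ℝ))
                  (1 : Matrix Xd Xd (RatFunc ℝ))) (Sum.inl d) j := by
        rw [Matrix.mul_apply]
        simp [A]
      have h5 : (E⁻¹ * XP) p j
          = ∑ x, Sum.elim (fun d => A p d) (fun x => B p x) (Sum.inr x)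
              * Matrix.fromRows TD
                (Matrix.fromCols (0 : Matrix Xd Xs (RatFunc ℝ))
                  (1 : Matrix Xd Xd (RatFunc ℝ))) (Sum.inr x) j := by
        cases j with
        | inl xs =>
          simp [hXPzero p xs, Matrix.fromCols_apply_inl]
        | inr xd =>
          simp only [Sum.elim_inr, Matrix.fromRows_apply_inr, Matrix.fromCols_apply_inr,
            Matrix.one_apply, mul_ite, mul_one, mul_zero]
          rw [Finset.sum_ite_eq' Finset.univ xd (fun x => B p x)]
          simp [B]
      rw [h4, h5]
      simp only [Sum.elim_inl, Sum.elim_inr, A, B]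
      ring
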